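/- Let E be a real Hilbert space and let f : E → ℝ be differentiable at every point, with gradient ∇f satisfying ‖∇f x − ∇f y‖ ≤ L ‖x − y‖ for all x, y ∈ E, where L > 0. Let n₀ ≥ 1, let x ∈ E and v ∈ E, and set x' = x − (1/(2 L n₀)) • v. Then f(x') ≤ f(x) + (1/(4 L n₀)) ‖∇f(x) − v‖² − (1/(8 L n₀)) ‖v‖². (The per-step descent inequality, with unnormalized step size η̃ = 1/(2Ln₀), used in the proof of the key lemma for the gradient dominated variant R-GD-SPIDER, in Euclidean space.) -/

import Mathlib

open InnerProductSpace

lemma descent_lemma {E : Type*} [NormedAddCommGroup E] [InnerProductSpace ℝ E]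
    [CompleteSpace E]
    (f : E → ℝ) (hf : ∀ x : E, DifferentiableAt ℝ f x)
    (L : ℝ) (hL : 0 < L)
    (hlip : ∀ x y : E, ‖gradient f x - gradient f y‖ ≤ L * ‖x - y‖)
    (x y : E) :
    f y ≤ f x + inner ℝ (gradient f x) (y - x) + L / 2 * ‖y - x‖ ^ 2 := by
  set d := y - x with hd
  set φ : ℝ → ℝ := fun t => f (x + t • d) - t * inner ℝ (gradient f x) d - L / 2 * t ^ 2 * ‖d‖ ^ 2 with hφ
  have hderiv : ∀ t : ℝ, HasDerivAt φ
      ((inner ℝ (gradient f (x + t • d)) d : ℝ) - inner ℝ (gradient f x) d - L * t * ‖d‖ ^ 2) t := by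
    intro t
    have hc : HasDerivAt (fun t : ℝ => x + t • d) d t := by
      simpa using ((hasDerivAt_id t).smul_const d).const_add x
    have hg : HasGradientAt f (gradient f (x + t • d)) (x + t • d) :=
      (hf _).hasGradientAt
    have hfc : HasDerivAt (fun t : ℝ => f (x + t • d))
        ((InnerProductSpace.toDual ℝ E (gradient f (x + t • d))) d) t :=
      hg.hasFDerivAt.comp_hasDerivAt t hc
    have h1 : HasDerivAt (fun t : ℝ => t * (inner ℝ (gradient f x) d : ℝ))
        (inner ℝ (gradient f x) d) t := by
      simpa using (hasDerivAt_id t).mul_const (inner ℝ (gradient f x) d : ℝ)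
    have h2 : HasDerivAt (fun t : ℝ => L / 2 * t ^ 2 * ‖d‖ ^ 2)
        (L * t * ‖d‖ ^ 2) t := by
      have := ((hasDerivAt_pow 2 t).const_mul (L / 2)).mul_const (‖d‖ ^ 2)
      exact this.congr_deriv (by rw [show (2:ℕ) - 1 = 1 from rfl]; push_cast; ring)
    have := (hfc.sub h1).sub h2
    exact this.congr_deriv (by simp [InnerProductSpace.toDual_apply_apply])
  have hmono : AntitoneOn φ (Set.Icc 0 1) := by
    apply antitoneOn_of_deriv_nonpos (convex_Icc 0 1)
    · exact Continuous.continuousOn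
        (continuous_iff_continuousAt.2 fun t => (hderiv t).continuousAt)
    · intro t ht
      exact ((hderiv t).differentiableAt).differentiableWithinAt
    · intro t ht
      rw [(hderiv t).deriv]
      rw [interior_Icc, Set.mem_Ioo] at ht
      have key : (inner ℝ (gradient f (x + t • d)) d : ℝ) - inner ℝ (gradient f x) d
          ≤ L * t * ‖d‖ ^ 2 := by
        rw [← inner_sub_left]
        calc (inner ℝ (gradient f (x + t • d) - gradient f x) d : ℝ)
            ≤ ‖gradient f (x + t • d) - gradient f x‖ * ‖d‖ := real_inner_le_norm _ _
          _ ≤ L * ‖(x + t • d) - x‖ * ‖d‖ := by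
              gcongr; exact hlip _ _
          _ = L * t * ‖d‖ ^ 2 := by
              have : ‖(x + t • d) - x‖ = t * ‖d‖ := by
                simp [norm_smul, abs_of_pos ht.1]
              rw [this]; ring
      linarith
  have h01 : φ 1 ≤ φ 0 := hmono (by norm_num) (by norm_num) zero_le_one
  simp only [hφ, one_smul, zero_smul, add_zero, one_pow, one_mul, zero_mul, zero_pow,
    mul_zero, sub_zero] at h01
  have : x + d = y := by rw [hd]; abel
  rw [this] at h01
  linarith

/-- Per-step descent inequality with unnormalized step size `1/(2Ln₀)` used in
the gradient dominated analysis of R-GD-SPIDER (Euclidean case): with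
`x' = x − (1/(2Ln₀)) • v`,
`f x' ≤ f x + (1/(4Ln₀)) ‖∇f x − v‖² − (1/(8Ln₀)) ‖v‖²`. -/
theorem stmt_14 {E : Type*} [NormedAddCommGroup E] [InnerProductSpace ℝ E]
    [CompleteSpace E]
    (f : E → ℝ) (hf : ∀ x : E, DifferentiableAt ℝ f x)
    (L : ℝ) (hL : 0 < L)
    (hlip : ∀ x y : E, ‖gradient f x - gradient f y‖ ≤ L * ‖x - y‖)
    (n₀ : ℝ) (hn₀ : 1 ≤ n₀) (x v : E)
    (x' : E) (hx' : x' = x - (1 / (2 * L * n₀)) • v) :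
    f x' ≤ f x + (1 / (4 * L * n₀)) * ‖gradient f x - v‖ ^ 2
        - (1 / (8 * L * n₀)) * ‖v‖ ^ 2 := by
  have hn : (0:ℝ) < n₀ := lt_of_lt_of_le one_pos hn₀
  set η : ℝ := 1 / (2 * L * n₀) with hη
  have hηpos : 0 < η := by positivity
  have hdesc := descent_lemma f hf L hL hlip x x'
  have hxx : x' - x = -(η • v) := by rw [hx']; abel
  rw [hxx] at hdesc
  have hnorm : ‖-(η • v)‖ ^ 2 = η ^ 2 * ‖v‖ ^ 2 := by
    rw [norm_neg, norm_smul]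
    simp [abs_of_pos hηpos]; ring
  have hin : (inner ℝ (gradient f x) (-(η • v)) : ℝ)
      = -η * inner ℝ (gradient f x) v := by
    rw [inner_neg_right, real_inner_smul_right]; ring
  have hsplit : (inner ℝ (gradient f x) v : ℝ)
      = inner ℝ (gradient f x - v) v + ‖v‖ ^ 2 := by
    rw [inner_sub_left, real_inner_self_eq_norm_sq]; ring
  have hcs : -(inner ℝ (gradient f x - v) v : ℝ)
      ≤ (1/2) * ‖gradient f x - v‖ ^ 2 + (1/2) * ‖v‖ ^ 2 := by
    have h1 : -(inner ℝ (gradient f x - v) v : ℝ) ≤ ‖gradient f x - v‖ * ‖v‖ := by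
      have := real_inner_le_norm (gradient f x - v) (-v)
      simpa [inner_neg_right] using this
    nlinarith [sq_nonneg (‖gradient f x - v‖ - ‖v‖)]
  -- combine
  rw [hnorm, hin] at hdesc
  rw [hsplit] at hdesc
  -- f x' ≤ f x + (-η)*(⟨g-v,v⟩ + ‖v‖²) + L/2 * η² ‖v‖²
  have hLη : L / 2 * (η ^ 2 * ‖v‖ ^ 2) ≤ η / 4 * ‖v‖ ^ 2 := by
    have h1 : L / 2 * η ^ 2 ≤ η / 4 := by
      have heq : L / 2 * η ^ 2 = η / 4 * (2 * L * η) := by ring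
      have h2 : 2 * L * η ≤ 1 := by
        rw [hη]
        rw [mul_one_div]
        rw [div_le_one (by positivity)]
        nlinarith
      nlinarith
    nlinarith [sq_nonneg ‖v‖]
  have h4 : 1 / (4 * L * n₀) = η / 2 := by rw [hη]; ring
  have h8 : 1 / (8 * L * n₀) = η / 4 := by rw [hη]; ring
  rw [h4, h8]
  nlinarith [mul_le_mul_of_nonneg_left hcs hηpos.le]
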